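/- Let A ∈ ℤ^{d×n} be of rank d with columns a₁,…,aₙ, let b ∈ ℝⁿ, let ω ∈ Ω_{A,b}⁺, and let x* ∈ ℒ_{A,b}⁺ be the unique point with A·x* = ω. Then the unique θ* ∈ ℝ^d solving Aᵀθ* = arccos(x*) + πb/2 (arccos applied coordinatewise) satisfies A·φ_{A,b}(θ*) = ω, and the Jacobian matrix −A · diag( sin(a₁·θ* − b₁π/2), …, sin(aₙ·θ* − bₙπ/2) ) · Aᵀ is negative definite; hence θ* is a linearly stable steady state of the dynamical system θ̇ = −A·φ_{A,b}(θ) + ω. -/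
import Mathlib


noncomputable section


/-- The real row span of the integer matrix `A`. -/
def rowSpanR {d n : ℕ} (A : Matrix (Fin d) (Fin n) ℤ) : Submodule ℝ (Fin n → ℝ) :=
  Submodule.span ℝ (Set.range fun i : Fin d => fun j : Fin n => (A i j : ℝ))

/-- The positive part `ℒ_{A,b}⁺ = cos(L_{A,b} ∩ (0,π)ⁿ)` of the Lissajous variety. -/
def LisPlus {d n : ℕ} (A : Matrix (Fin d) (Fin n) ℤ) (b : Fin n → ℝ) :
    Set (Fin n → ℝ) :=
  (fun x j => Real.cos (x j)) ''
    ({y | ∃ x ∈ rowSpanR A, y = x - (Real.pi / 2) • b} ∩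
     {x | ∀ j, x j ∈ Set.Ioo 0 Real.pi})

/-- `Ω_{A,b}⁺ = A(ℒ_{A,b}⁺)`. -/
def OmegaPlus {d n : ℕ} (A : Matrix (Fin d) (Fin n) ℤ) (b : Fin n → ℝ) :
    Set (Fin d → ℝ) :=
  (fun x i => ∑ j, (A i j : ℝ) * x j) '' LisPlus A b


open Matrix in
lemma aux_vecMul_inj {d n : ℕ} (A : Matrix (Fin d) (Fin n) ℤ)
    (hrank : (A.map fun z => (z : ℚ)).rank = d)
    (v : Fin d → ℝ) (hv : ∀ l, ∑ i, v i * (A i l : ℝ) = 0) : v = 0 := by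
  set Aq : Matrix (Fin d) (Fin n) ℚ := A.map fun z => (z : ℚ) with hAq
  set Ar : Matrix (Fin d) (Fin n) ℝ := A.map fun z => (z : ℝ) with hAr
  have hM : (Aq * Aq.transpose).rank = d := by
    rw [Matrix.rank_self_mul_transpose, hrank]
  have hunit : IsUnit (Aq * Aq.transpose) := by
    rw [← Matrix.mulVec_surjective_iff_isUnit]
    have hr : LinearMap.range (Aq * Aq.transpose).mulVecLin = ⊤ := by
      apply Submodule.eq_top_of_finrank_eq
      rw [← Matrix.rank, hM]
      simp [Module.finrank_pi]
    intro y
    have := hr ▸ Submodule.mem_top (x := y) (R := ℚ)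
    obtain ⟨x, hx⟩ := this
    exact ⟨x, hx⟩
  have hdet : (Aq * Aq.transpose).det ≠ 0 := by
    have := hunit.map (Matrix.detMonoidHom (n := Fin d) (R := ℚ))
    simpa [isUnit_iff_ne_zero] using this
  have hmap : Ar = Aq.map (Rat.castHom ℝ) := by
    ext i j; simp [hAq, hAr]
  have hdetR : (Ar * Ar.transpose).det ≠ 0 := by
    have : Ar * Ar.transpose = (Aq * Aq.transpose).map (Rat.castHom ℝ) := by
      rw [hmap, Matrix.map_mul]
      congr 1
    have hd := RingHom.map_det (Rat.castHom ℝ) (Aq * Aq.transpose)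
    rw [RingHom.mapMatrix_apply] at hd
    rw [this, ← hd]
    simpa using hdet
  have hunitR : IsUnit (Ar * Ar.transpose) := by
    rw [Matrix.isUnit_iff_isUnit_det]
    simpa [isUnit_iff_ne_zero] using hdetR
  have hinj := Matrix.vecMul_injective_iff_isUnit.mpr hunitR
  have hvm : Matrix.vecMul v Ar = 0 := by
    ext j
    simpa [Matrix.vecMul, dotProduct, hAr] using hv j
  have : Matrix.vecMul v (Ar * Ar.transpose) = Matrix.vecMul 0 (Ar * Ar.transpose) := by
    rw [← Matrix.vecMul_vecMul, hvm]
    simp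
  exact hinj this

/-- Proposition 5.4: for `ω ∈ Ω_{A,b}⁺` and `x*` the unique point of
`ℒ_{A,b}⁺ ∩ {Ax = ω}`, the solution `θ*` of `Aᵀθ* = arccos(x*) + πb/2` is a steady
state of `θ̇ = -A φ_{A,b}(θ) + ω` and the Jacobian there is negative definite. -/
theorem stmt14 {d n : ℕ} (A : Matrix (Fin d) (Fin n) ℤ)
    (hrank : (A.map fun z => (z : ℚ)).rank = d) (b : Fin n → ℝ) (ω : Fin d → ℝ)
    (hω : ω ∈ OmegaPlus A b)
    (xstar : Fin n → ℝ) (hx : xstar ∈ LisPlus A b)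
    (hAx : ∀ i, ∑ j, (A i j : ℝ) * xstar j = ω i)
    (θstar : Fin d → ℝ)
    (hθ : ∀ l, ∑ i, (A i l : ℝ) * θstar i =
      Real.arccos (xstar l) + Real.pi * b l / 2) :
    (∀ i, ∑ l, (A i l : ℝ) *
        Real.cos ((∑ i', (A i' l : ℝ) * θstar i') - b l * Real.pi / 2) = ω i) ∧
    ∀ v : Fin d → ℝ, v ≠ 0 →
      ∑ i, ∑ i', v i * (-(∑ l, (A i l : ℝ) *
        Real.sin ((∑ i'', (A i'' l : ℝ) * θstar i'') - b l * Real.pi / 2) *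
        (A i' l : ℝ))) * v i' < 0 := by
  obtain ⟨y, ⟨⟨-, hy2⟩, hxy⟩⟩ := hx
  have hys : ∀ l, Real.arccos (xstar l) = y l := by
    intro l
    have h1 := (hy2 l).1
    have h2 := (hy2 l).2
    rw [← congrFun hxy l]
    exact Real.arccos_cos h1.le h2.le
  have key : ∀ l, (∑ i', (A i' l : ℝ) * θstar i') - b l * Real.pi / 2
      = Real.arccos (xstar l) := by
    intro l
    rw [hθ l]
    ring
  constructor
  · intro i
    rw [← hAx i]
    refine Finset.sum_congr rfl fun l _ => ?_
    rw [key l, hys l, ← congrFun hxy l]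
  · intro v hv
    set c : Fin d → Fin n → ℝ := fun i l => (A i l : ℝ) with hc
    set s : Fin n → ℝ := fun l =>
      Real.sin ((∑ i'', (A i'' l : ℝ) * θstar i'') - b l * Real.pi / 2) with hs
    have hspos : ∀ l, 0 < s l := by
      intro l
      rw [hs]
      simp only
      rw [key l, hys l]
      exact Real.sin_pos_of_pos_of_lt_pi (hy2 l).1 (hy2 l).2
    set w : Fin n → ℝ := fun l => ∑ i, v i * c i l with hw
    have hwne : w ≠ 0 := by
      intro h0
      apply hv
      refine aux_vecMul_inj A hrank v fun l => ?_
      exact congrFun h0 l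
    have term : ∀ l, s l * (w l) ^ 2 = ∑ i, ∑ i', v i * (c i l * s l * c i' l) * v i' := by
      intro l
      rw [sq, hw]
      simp only
      rw [Finset.sum_mul_sum, Finset.mul_sum]
      refine Finset.sum_congr rfl fun i _ => ?_
      rw [Finset.mul_sum]
      refine Finset.sum_congr rfl fun i' _ => ?_
      ring
    have heq : ∑ i, ∑ i', v i * (-(∑ l, c i l * s l * c i' l)) * v i'
        = -∑ l, s l * (w l) ^ 2 := by
      calc ∑ i, ∑ i', v i * (-(∑ l, c i l * s l * c i' l)) * v i'
          = ∑ i, ∑ i', -(∑ l, v i * (c i l * s l * c i' l) * v i') := by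
            refine Finset.sum_congr rfl fun i _ => Finset.sum_congr rfl fun i' _ => ?_
            rw [mul_neg, neg_mul, neg_inj, Finset.mul_sum, Finset.sum_mul]
        _ = -∑ i, ∑ i', ∑ l, v i * (c i l * s l * c i' l) * v i' := by
            simp
        _ = -∑ l, ∑ i, ∑ i', v i * (c i l * s l * c i' l) * v i' := by
            rw [show (∑ i, ∑ i', ∑ l, v i * (c i l * s l * c i' l) * v i')
                = ∑ i, ∑ l, ∑ i', v i * (c i l * s l * c i' l) * v i' from
              Finset.sum_congr rfl fun i _ => Finset.sum_comm, Finset.sum_comm]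
        _ = -∑ l, s l * (w l) ^ 2 := by
            congr 1
            exact (Finset.sum_congr rfl fun l _ => (term l).symm)
    rw [heq, neg_lt, neg_zero]
    have hex : ∃ l, w l ≠ 0 := by
      by_contra h
      push_neg at h
      exact hwne (funext h)
    obtain ⟨l0, hl0⟩ := hex
    refine Finset.sum_pos' (fun l _ => ?_) ⟨l0, Finset.mem_univ l0, ?_⟩
    · exact mul_nonneg (hspos l).le (sq_nonneg _)
    · exact mul_pos (hspos l0) (by positivity)
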